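/- Under the KKT conditions and almost-sure uniqueness of the argmax (which holds when pairwise differences of m^t(X) are continuously distributed), the expected outcome of the policy pi* equals the dual optimal value: E[sum_t pi*^t(X) m^t(X)] = E[max_t (m^t(X) - mu*^t)] + sum_t mu*^t b^t. -/

import Mathlib

open MeasureTheory

open Classical in
noncomputable def lexArgmax {ι : Type*} [Fintype ι] [LinearOrder ι] [Nonempty ι] (f : ι → ℝ) : ι :=
  (Finset.univ.filter (fun t => ∀ t', f t' ≤ f t)).min' (by
    obtain ⟨t, -, ht⟩ := Finset.exists_max_image Finset.univ f Finset.univ_nonempty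
    exact ⟨t, Finset.mem_filter.mpr ⟨Finset.mem_univ t, fun t' => ht t' (Finset.mem_univ t')⟩⟩)

open Classical in
lemma lexArgmax_isMax {ι : Type*} [Fintype ι] [LinearOrder ι] [Nonempty ι] (f : ι → ℝ)
    (t' : ι) : f t' ≤ f (lexArgmax f) := by
  have h : lexArgmax f ∈ Finset.univ.filter (fun t => ∀ t', f t' ≤ f t) := Finset.min'_mem _ _
  exact (Finset.mem_filter.mp h).2 t'

open Classical in
lemma lexArgmax_le {ι : Type*} [Fintype ι] [LinearOrder ι] [Nonempty ι] (f : ι → ℝ) (t : ι)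
    (ht : ∀ t', f t' ≤ f t) : lexArgmax f ≤ t :=
  Finset.min'_le _ _ (Finset.mem_filter.mpr ⟨Finset.mem_univ t, ht⟩)

lemma lexArgmax_eq_iff {ι : Type*} [Fintype ι] [LinearOrder ι] [Nonempty ι] (f : ι → ℝ)
    (t : ι) : lexArgmax f = t ↔ (∀ t', f t' ≤ f t) ∧ ∀ s, s < t → ¬ (∀ t', f t' ≤ f s) := by
  constructor
  · rintro rfl
    exact ⟨lexArgmax_isMax f, fun s hs hmax => absurd (lexArgmax_le f s hmax) (not_le.mpr hs)⟩
  · rintro ⟨hmax, hmin⟩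
    rcases (lexArgmax_le f t hmax).lt_or_eq with h | h
    · exact absurd (lexArgmax_isMax f) (hmin _ h)
    · exact h

theorem stmt7 {𝒳 : Type*} [MeasurableSpace 𝒳] (P : Measure 𝒳) [IsProbabilityMeasure P]
    {m : ℕ} (mt : Fin (m + 1) → 𝒳 → ℝ) (b : Fin (m + 1) → ℝ) (hb : ∀ t, 0 < b t ∧ b t ≤ 1)
    (C : ℝ) (hbdd : ∀ t x, |mt t x| ≤ C)
    (hmeas : ∀ t, Measurable (mt t))
    (hatomless : ∀ t t' : Fin (m + 1), t ≠ t' → ∀ z : ℝ, P {x | mt t x - mt t' x = z} = 0)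
    (μstar lamstar : Fin (m + 1) → ℝ)
    (hμnn : ∀ t, 0 ≤ μstar t) (hlamnn : ∀ t, 0 ≤ lamstar t)
    (hstat : ∀ t, (P {x | ∀ t', t' ≠ t → mt t' x - μstar t' ≤ mt t x - μstar t}).toReal
        + lamstar t = b t)
    (hcs : ∀ t, lamstar t * μstar t = 0) :
    ∫ x, ∑ t, (if lexArgmax (fun t' => mt t' x - μstar t') = t then (1 : ℝ) else 0) * mt t x ∂P
      = (∫ x, Finset.univ.sup' Finset.univ_nonempty (fun t => mt t x - μstar t) ∂P)
        + ∑ t, μstar t * b t := by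
  classical
  set f : 𝒳 → Fin (m + 1) → ℝ := fun x t => mt t x - μstar t with hf
  set T : 𝒳 → Fin (m + 1) := fun x => lexArgmax (f x) with hT
  set g : 𝒳 → ℝ := fun x => Finset.univ.sup' Finset.univ_nonempty (fun t => mt t x - μstar t)
    with hg
  -- maximizer sets
  set Mset : Fin (m + 1) → Set 𝒳 := fun t => {x | ∀ t', f x t' ≤ f x t} with hMset
  set A : Fin (m + 1) → Set 𝒳 := fun t => {x | T x = t} with hA
  have hMmeas : ∀ t, MeasurableSet (Mset t) := by
    intro t
    have : Mset t = ⋂ t', {x | mt t' x - μstar t' ≤ mt t x - μstar t} := by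
      ext x; simp [hMset, hf, Set.mem_iInter]
    rw [this]
    exact MeasurableSet.iInter fun t' =>
      measurableSet_le ((hmeas t').sub measurable_const) ((hmeas t).sub measurable_const)
  have hAmeas : ∀ t, MeasurableSet (A t) := by
    intro t
    have : A t = Mset t ∩ ⋂ s, {x | s < t → x ∉ Mset s} := by
      ext x
      simp only [hA, hT, Set.mem_setOf_eq, Set.mem_inter_iff, Set.mem_iInter,
        lexArgmax_eq_iff]
      exact Iff.rfl
    rw [this]
    refine (hMmeas t).inter (MeasurableSet.iInter fun s => ?_)
    by_cases hs : s < t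
    · simp only [hs, true_implies]
      exact (hMmeas s).compl
    · have : {x : 𝒳 | s < t → x ∉ Mset s} = Set.univ := by
        ext x; simp [hs]
      rw [this]; exact MeasurableSet.univ
  -- ties are null
  have htie : ∀ s t : Fin (m + 1), s ≠ t → P {x | f x s = f x t} = 0 := by
    intro s t hst
    have h := hatomless s t hst (μstar s - μstar t)
    have : {x | f x s = f x t} = {x | mt s x - mt t x = μstar s - μstar t} := by
      ext x; simp only [hf, Set.mem_setOf_eq]; constructor <;> intro h' <;> linarith
    rw [this]; exact h
  -- P (A t) = P (Mset t)
  have hPA : ∀ t, P (A t) = P (Mset t) := by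
    intro t
    refine le_antisymm (measure_mono ?_) ?_
    · intro x hx
      simp only [hA, hT, Set.mem_setOf_eq] at hx
      intro t'
      rw [← hx]
      exact lexArgmax_isMax (f x) t'
    · have hsub : Mset t ⊆ A t ∪ ⋃ s, ⋃ (_ : s ≠ t), {x | f x s = f x t} := by
        intro x hx
        by_cases hxt : T x = t
        · exact Or.inl hxt
        · refine Or.inr ?_
          refine Set.mem_iUnion.mpr ⟨T x, Set.mem_iUnion.mpr ⟨hxt, ?_⟩⟩
          exact le_antisymm (hx (T x)) (lexArgmax_isMax (f x) t)
      calc P (Mset t) ≤ P (A t ∪ ⋃ s, ⋃ (_ : s ≠ t), {x | f x s = f x t}) := measure_mono hsub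
        _ ≤ P (A t) + P (⋃ s, ⋃ (_ : s ≠ t), {x | f x s = f x t}) := measure_union_le _ _
        _ = P (A t) := by
            rw [measure_iUnion_null fun s => measure_iUnion_null fun hs => htie s t hs, add_zero]
  -- (P (Mset t)).toReal = b t - lamstar t
  have hPM : ∀ t, (P (Mset t)).toReal = b t - lamstar t := by
    intro t
    have : Mset t = {x | ∀ t', t' ≠ t → mt t' x - μstar t' ≤ mt t x - μstar t} := by
      ext x
      simp only [hMset, hf, Set.mem_setOf_eq]
      constructor
      · intro h t' _; exact h t'
      · intro h t'
        by_cases ht' : t' = t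
        · subst ht'; exact le_refl _
        · exact h t' ht'
    rw [this]
    have := hstat t
    linarith
  -- pointwise identity
  have hsup_eq : ∀ x, g x = mt (T x) x - μstar (T x) := by
    intro x
    refine le_antisymm (Finset.sup'_le _ _ fun t _ => lexArgmax_isMax (f x) t)
      (Finset.le_sup' (fun t => mt t x - μstar t) (Finset.mem_univ (T x)))
  have hpt : ∀ x, ∑ t, (if lexArgmax (fun t' => mt t' x - μstar t') = t then (1 : ℝ) else 0)
      * mt t x = g x + ∑ t, (A t).indicator (fun _ => μstar t) x := by
    intro x
    have h1 : ∑ t, (if lexArgmax (fun t' => mt t' x - μstar t') = t then (1 : ℝ) else 0)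
        * mt t x = mt (T x) x := by
      simp only [ite_mul, one_mul, zero_mul]
      rw [Finset.sum_ite_eq]
      simp [hT, hf]
    have h2 : ∑ t, (A t).indicator (fun _ => μstar t) x = μstar (T x) := by
      have : ∀ t, (A t).indicator (fun _ => μstar t) x
          = if T x = t then μstar t else 0 := by
        intro t
        by_cases h : T x = t <;> simp [Set.indicator, hA, h]
      simp_rw [this]
      rw [Finset.sum_ite_eq]
      simp
    rw [h1, h2, hsup_eq x]
    ring
  -- integrability
  have hgmeas : Measurable g := by
    have := Finset.measurable_sup' (Finset.univ_nonempty (α := Fin (m + 1)))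
      (f := fun t x => mt t x - μstar t)
      (fun t _ => (hmeas t).sub measurable_const)
    have heq : g = Finset.univ.sup' Finset.univ_nonempty (fun t x => mt t x - μstar t) := by
      funext x
      rw [hg]
      simp [Finset.sup'_apply]
    rw [heq]; exact this
  have hgbound : ∀ x, ‖g x‖ ≤ C + ∑ t, |μstar t| := by
    intro x
    have hbnd : ∀ t : Fin (m + 1), |mt t x - μstar t| ≤ C + ∑ t', |μstar t'| := by
      intro t
      have h1 : |μstar t| ≤ ∑ t', |μstar t'| :=
        Finset.single_le_sum (f := fun t' => |μstar t'|) (fun t' _ => abs_nonneg _)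
          (Finset.mem_univ t)
      have h2 := hbdd t x
      have := abs_sub (mt t x) (μstar t)
      calc |mt t x - μstar t| ≤ |mt t x| + |μstar t| := abs_sub _ _
        _ ≤ C + ∑ t', |μstar t'| := add_le_add h2 h1
    rw [Real.norm_eq_abs, abs_le]
    constructor
    · have := (abs_le.mp (hbnd (T x))).1
      rw [hsup_eq x] at *
      linarith
    · refine Finset.sup'_le _ _ fun t _ => ?_
      exact (abs_le.mp (hbnd t)).2
  have hgint : Integrable g P := by
    refine Integrable.mono' (integrable_const (C + ∑ t, |μstar t|))
      hgmeas.aestronglyMeasurable (Filter.Eventually.of_forall hgbound)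
  have hindint : ∀ t : Fin (m + 1), Integrable ((A t).indicator (fun _ => μstar t)) P :=
    fun t => (integrable_const (μstar t)).indicator (hAmeas t)
  have hsumint : Integrable (fun x => ∑ t, (A t).indicator (fun _ => μstar t) x) P :=
    integrable_finset_sum _ fun t _ => hindint t
  -- compute
  calc ∫ x, ∑ t, (if lexArgmax (fun t' => mt t' x - μstar t') = t then (1 : ℝ) else 0)
        * mt t x ∂P
      = ∫ x, (g x + ∑ t, (A t).indicator (fun _ => μstar t) x) ∂P := by
        refine integral_congr_ae (Filter.Eventually.of_forall fun x => hpt x)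
    _ = (∫ x, g x ∂P) + ∫ x, ∑ t, (A t).indicator (fun _ => μstar t) x ∂P :=
        integral_add hgint hsumint
    _ = (∫ x, g x ∂P) + ∑ t, μstar t * b t := by
        congr 1
        rw [integral_finset_sum _ fun t _ => hindint t]
        refine Finset.sum_congr rfl fun t _ => ?_
        rw [integral_indicator_const (μstar t) (hAmeas t), smul_eq_mul,
          measureReal_def, hPA t, hPM t]
        linear_combination -hcs t
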